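/- Let x, y, r be integers with gcd(x, y, r) = 1 and (x+r)^2 + (x+2r)^2 = y^2 with r ≥ 1. Then every prime divisor of r is congruent to 1 or 7 modulo 8. -/

import Mathlib

theorem stmt_5 (x y r : ℤ) (hr : 1 ≤ r) (hgcd : Int.gcd x (Int.gcd y r) = 1)
    (heq : (x + r) ^ 2 + (x + 2 * r) ^ 2 = y ^ 2) :
    ∀ p : ℕ, p.Prime → (p : ℤ) ∣ r → p % 8 = 1 ∨ p % 8 = 7 := by
  intro p hp hpr
  haveI : Fact p.Prime := ⟨hp⟩
  have hpz : Prime (p : ℤ) := Nat.prime_iff_prime_int.mp hp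
  have hcontra : ¬ ((p : ℤ) ∣ x ∧ (p : ℤ) ∣ y) := by
    rintro ⟨hx, hy⟩
    have h1 : (p : ℤ) ∣ (Int.gcd x (Int.gcd y r) : ℤ) :=
      Int.dvd_coe_gcd hx (Int.dvd_coe_gcd hy hpr)
    rw [hgcd] at h1
    exact hp.one_lt.ne' (by exact_mod_cast Int.eq_one_of_dvd_one (by positivity) h1)
  have hp2 : p ≠ 2 := by
    rintro rfl
    obtain ⟨k, hk⟩ := hpr
    push_cast at hk
    subst hk
    have hy2 : (2 : ℤ) ∣ y := by
      have h : (2 : ℤ) ∣ y ^ 2 := ⟨x ^ 2 + 6 * x * k + 10 * k ^ 2, by linear_combination -heq⟩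
      exact Int.prime_two.dvd_of_dvd_pow h
    obtain ⟨m, hm⟩ := hy2
    have hx2 : (2 : ℤ) ∣ x := by
      have h2 : (2 : ℤ) * x ^ 2 = 2 * (2 * m ^ 2 - 6 * x * k - 10 * k ^ 2) := by
        linear_combination heq + (y + 2 * m) * hm
      have h3 : x ^ 2 = 2 * m ^ 2 - 6 * x * k - 10 * k ^ 2 :=
        mul_left_cancel₀ two_ne_zero h2
      have h : (2 : ℤ) ∣ x ^ 2 := ⟨m ^ 2 - 3 * x * k - 5 * k ^ 2, by linear_combination h3⟩
      exact Int.prime_two.dvd_of_dvd_pow h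
    exact hcontra ⟨by exact_mod_cast hx2, by push_cast; exact ⟨m, hm⟩⟩
  -- work mod p
  have hr0 : ((r : ℤ) : ZMod p) = 0 := by
    exact_mod_cast (ZMod.intCast_zmod_eq_zero_iff_dvd r p).mpr hpr
  have hmod : (2 : ZMod p) * (x : ZMod p) ^ 2 = (y : ZMod p) ^ 2 := by
    have := congrArg (Int.cast : ℤ → ZMod p) heq
    push_cast at this
    rw [hr0] at this
    ring_nf at this ⊢
    linear_combination this
  have hxne : ((x : ℤ) : ZMod p) ≠ 0 := by
    intro h0
    have hxd : (p : ℤ) ∣ x := (ZMod.intCast_zmod_eq_zero_iff_dvd x p).mp h0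
    have hyd : (p : ℤ) ∣ y := by
      have : (p : ℤ) ∣ y ^ 2 := by
        have : ((y : ℤ) : ZMod p) ^ 2 = 0 := by rw [← hmod, h0]; ring
        exact (ZMod.intCast_zmod_eq_zero_iff_dvd _ p).mp (by push_cast at this ⊢; exact this)
      exact hpz.dvd_of_dvd_pow this
    exact hcontra ⟨hxd, hyd⟩
  have hsq : IsSquare (2 : ZMod p) := by
    refine ⟨(y : ZMod p) * ((x : ZMod p))⁻¹, ?_⟩
    have hinv : (x : ZMod p) * ((x : ZMod p))⁻¹ = 1 := ZMod.mul_inv_of_unit _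
      (Ne.isUnit hxne)
    field_simp
    linear_combination hmod
  exact (ZMod.exists_sq_eq_two_iff hp2).mp hsq
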